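/- For every integer k ≥ 2, the image Ω_k = ψ_k(𝔻) of the open unit disc under ψ_k(z) = z + z^k/k contains the open disc of radius (k−1)²/k² centered at the origin; equivalently, with t = k²/(k−1)², the unit disc satisfies 𝔻 ⊆ tΩ_k = {tw : w ∈ Ω_k}. -/

import Mathlib

open Metric

lemma pow_sub_pow_bound (k : ℕ) (ρ : ℝ) (hρ0 : 0 ≤ ρ) (hρ1 : ρ ≤ 1) (hk : 2 ≤ k)
    (x y : ℂ) (hx : ‖x‖ ≤ ρ) (hy : ‖y‖ ≤ ρ) : ‖x ^ k - y ^ k‖ ≤ k * ρ * ‖x - y‖ := by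
  rw [← geom_sum₂_mul x y k, norm_mul]
  gcongr ?_ * _
  calc ‖∑ i ∈ Finset.range k, x ^ i * y ^ (k - 1 - i)‖
      ≤ ∑ i ∈ Finset.range k, ‖x ^ i * y ^ (k - 1 - i)‖ := norm_sum_le _ _
    _ ≤ ∑ _i ∈ Finset.range k, ρ := by
        apply Finset.sum_le_sum
        intro i hi
        rw [norm_mul, norm_pow, norm_pow]
        calc ‖x‖ ^ i * ‖y‖ ^ (k - 1 - i) ≤ ρ ^ i * ρ ^ (k - 1 - i) := by
              gcongr <;> positivity
          _ = ρ ^ (k - 1) := by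
              rw [← pow_add]; congr 1
              have := Finset.mem_range.mp hi; omega
          _ ≤ ρ ^ 1 := pow_le_pow_of_le_one hρ0 hρ1 (by omega)
          _ = ρ := pow_one ρ
    _ = k * ρ := by rw [Finset.sum_const, Finset.card_range, nsmul_eq_mul]

lemma exists_preimage (k : ℕ) (hk : 2 ≤ k) (w : ℂ)
    (hw : ‖w‖ < ((k : ℝ) - 1) ^ 2 / (k : ℝ) ^ 2) :
    ∃ z : ℂ, ‖z‖ < 1 ∧ z + z ^ k / k = w := by
  have hk0 : (0 : ℝ) < k := by positivity
  have hk2 : (2 : ℝ) ≤ k := by exact_mod_cast hk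
  set ρ : ℝ := ((k : ℝ) - 1) / k with hρ
  have hρ0 : 0 < ρ := by rw [hρ]; apply div_pos <;> linarith
  have hρ1 : ρ < 1 := by rw [hρ, div_lt_one hk0]; linarith
  have eqρ : ((k : ℝ) - 1) ^ 2 / (k : ℝ) ^ 2 + ρ / k = ρ := by
    rw [hρ]; field_simp; ring
  set f : ℂ → ℂ := fun z => w - z ^ k / k with hf
  set s : Set ℂ := closedBall (0 : ℂ) ρ with hs
  have hsf : Set.MapsTo f s s := by
    intro z hz
    rw [hs, mem_closedBall_zero_iff] at hz ⊢
    have hzk : ‖z ^ k‖ ≤ ρ := by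
      rw [norm_pow]
      calc ‖z‖ ^ k ≤ ρ ^ k := pow_le_pow_left₀ (norm_nonneg z) hz k
        _ ≤ ρ ^ 1 := pow_le_pow_of_le_one hρ0.le hρ1.le (by omega)
        _ = ρ := pow_one ρ
    show ‖w - z ^ k / (k : ℂ)‖ ≤ ρ
    apply le_of_lt
    calc ‖w - z ^ k / (k : ℂ)‖ ≤ ‖w‖ + ‖z ^ k / (k : ℂ)‖ := norm_sub_le _ _
      _ ≤ ‖w‖ + ρ / k := by
          rw [norm_div, Complex.norm_natCast]; gcongr
      _ < ((k : ℝ) - 1) ^ 2 / (k : ℝ) ^ 2 + ρ / k := by gcongr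
      _ = ρ := eqρ
  have hcomplete : IsComplete s := isClosed_closedBall.isComplete
  set K : NNReal := ρ.toNNReal with hKdef
  have hK : (K : ℝ) = ρ := Real.coe_toNNReal ρ hρ0.le
  have hcontr : ContractingWith K (hsf.restrict f s s) := by
    constructor
    · rw [← NNReal.coe_lt_one, hK]; exact hρ1
    · apply LipschitzWith.of_dist_le_mul
      rintro ⟨x, hx⟩ ⟨y, hy⟩
      rw [Subtype.dist_eq, Set.MapsTo.val_restrict_apply, Set.MapsTo.val_restrict_apply,
        Subtype.dist_eq, hK]
      rw [hs, mem_closedBall_zero_iff] at hx hy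
      have key := pow_sub_pow_bound k ρ hρ0.le hρ1.le hk y x hy hx
      have : f x - f y = (y ^ k - x ^ k) / k := by rw [hf]; ring
      rw [dist_eq_norm, dist_eq_norm, this, norm_div, Complex.norm_natCast]
      rw [div_le_iff₀ hk0]
      calc ‖y ^ k - x ^ k‖ ≤ k * ρ * ‖y - x‖ := key
        _ = ρ * ‖x - y‖ * k := by rw [norm_sub_rev]; ring
  obtain ⟨z, hzs, hfz, -⟩ := hcontr.exists_fixedPoint' hcomplete hsf
    (x := 0) (by rw [hs, mem_closedBall_zero_iff]; simpa using hρ0.le) (edist_ne_top _ _)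
  refine ⟨z, lt_of_le_of_lt (mem_closedBall_zero_iff.mp hzs) hρ1, ?_⟩
  have : w - z ^ k / k = z := hfz
  linear_combination -this

theorem ball_subset_image_psi (k : ℕ) (hk : 2 ≤ k) :
    Metric.ball (0 : ℂ) (((k : ℝ) - 1) ^ 2 / (k : ℝ) ^ 2) ⊆
      (fun z : ℂ => z + z ^ k / k) '' Metric.ball (0 : ℂ) 1 ∧
    Metric.ball (0 : ℂ) 1 ⊆
      (fun w : ℂ => (((k : ℝ) ^ 2 / ((k : ℝ) - 1) ^ 2 : ℝ) : ℂ) * w) ''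
        ((fun z : ℂ => z + z ^ k / k) '' Metric.ball (0 : ℂ) 1) := by
  have hk0 : (0 : ℝ) < k := by positivity
  have hk2 : (2 : ℝ) ≤ k := by exact_mod_cast hk
  have hc0 : (0 : ℝ) < ((k : ℝ) - 1) ^ 2 / (k : ℝ) ^ 2 := by
    apply div_pos <;> nlinarith
  constructor
  · intro w hw
    rw [mem_ball_zero_iff] at hw
    obtain ⟨z, hz1, hz2⟩ := exists_preimage k hk w hw
    exact ⟨z, mem_ball_zero_iff.mpr hz1, hz2⟩
  · intro u hu
    rw [mem_ball_zero_iff] at hu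
    set c : ℝ := ((k : ℝ) - 1) ^ 2 / (k : ℝ) ^ 2 with hc
    have hwnorm : ‖(c : ℂ) * u‖ < c := by
      rw [norm_mul, Complex.norm_real, Real.norm_of_nonneg hc0.le]
      calc c * ‖u‖ < c * 1 := by gcongr
        _ = c := mul_one c
    obtain ⟨z, hz1, hz2⟩ := exists_preimage k hk ((c : ℂ) * u) hwnorm
    refine ⟨z + z ^ k / k, ⟨z, mem_ball_zero_iff.mpr hz1, rfl⟩, ?_⟩
    rw [hz2]
    have h1 : ((k : ℝ) - 1) ≠ 0 := by linarith
    have h2 : (k : ℝ) ≠ 0 := hk0.ne'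
    have hr : ((k : ℝ) ^ 2 / ((k : ℝ) - 1) ^ 2 : ℝ) * c = 1 := by
      rw [hc]; field_simp
    have : (((k : ℝ) ^ 2 / ((k : ℝ) - 1) ^ 2 : ℝ) : ℂ) * (c : ℂ) = 1 := by
      rw [← Complex.ofReal_mul, hr, Complex.ofReal_one]
    show (((k : ℝ) ^ 2 / ((k : ℝ) - 1) ^ 2 : ℝ) : ℂ) * ((c : ℂ) * u) = u
    rw [← mul_assoc, this, one_mul]
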